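/- The vector space of homogeneous commutative polynomials of degree m in n variables over a field of characteristic zero admits a basis consisting of m-th powers of linear forms (c₁x₁+⋯+cₙxₙ)^m. -/

import Mathlib

open scoped BigOperators

noncomputable section

/-- The word `X₁^{α₁} ⋯ Xₙ^{αₙ}` as a list of generator indices. -/
def word (n : ℕ) (α : Fin n → ℕ) : List (Fin n) :=
  (List.finRange n).flatMap fun i => List.replicate (α i) i

/-- The symmetrization `symz(X^(α)) = (1/m!) ∑_{σ ∈ Σₘ} X'_{σ(1)} ⋯ X'_{σ(m)}`
of the monomial `X^(α)` in the free associative algebra. -/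
def symz (K : Type) [Field K] (n : ℕ) (α : Fin n → ℕ) : FreeAlgebra K (Fin n) :=
  ((Nat.factorial (word n α).length : K))⁻¹ •
    ∑ σ : Equiv.Perm (Fin (word n α).length),
      (List.ofFn fun j => FreeAlgebra.ι K ((word n α).get (σ j))).prod

/-- Regular homogeneous polynomials of degree `m`: the span of `m`-th powers of
linear forms in the generators. -/
def RegHom (K : Type) [Field K] (n m : ℕ) : Submodule K (FreeAlgebra K (Fin n)) :=
  Submodule.span K {x | ∃ c : Fin n → K, x = (∑ i, c i • FreeAlgebra.ι K i) ^ m}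

/-- Regular polynomials: the span of all powers of linear forms in the generators. -/
def Reg (K : Type) [Field K] (n : ℕ) : Submodule K (FreeAlgebra K (Fin n)) :=
  Submodule.span K {x | ∃ (m : ℕ) (c : Fin n → K), x = (∑ i, c i • FreeAlgebra.ι K i) ^ m}

/-- The symmetrization map `Φ` from commutative polynomials to the free algebra,
sending `x^(α)` to `symz(X^(α))` and extended linearly. -/
def Phi (K : Type) [Field K] (n : ℕ) (p : MvPolynomial (Fin n) K) : FreeAlgebra K (Fin n) :=
  ∑ d ∈ p.support, p.coeff d • symz K n (fun i => d i)

open MvPolynomial Finset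

private lemma prod_X_pow_eq (K : Type) [Field K] (n : ℕ) (k : Fin n → ℕ) :
    (∏ i, (X i : MvPolynomial (Fin n) K) ^ k i)
      = monomial (Finsupp.equivFunOnFinite.symm k) 1 := by
  rw [← prod_X_pow_eq_monomial]
  refine (Finset.prod_subset (Finset.subset_univ _) fun i _ hi => ?_).symm
  have h0 : (Finsupp.equivFunOnFinite.symm k) i = 0 := by
    simpa [Finsupp.mem_support_iff] using hi
  have : k i = 0 := by simpa using h0
  simp [h0, this]

private lemma f_monomial_eq_zero (K : Type) [Field K] [CharZero K] (n m : ℕ)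
    (f : MvPolynomial (Fin n) K →ₗ[K] K)
    (hf : ∀ c : Fin n → K, f ((∑ j, c j • (X j : MvPolynomial (Fin n) K)) ^ m) = 0)
    (d : Fin n →₀ ℕ) (hd : d.degree = m) : f (monomial d 1) = 0 := by
  classical
  set Q : MvPolynomial (Fin n) K :=
    ∑ k ∈ piAntidiag (univ : Finset (Fin n)) m,
      C ((Nat.multinomial univ k : K) * f (monomial (Finsupp.equivFunOnFinite.symm k) 1)) *
        ∏ i, (X i : MvPolynomial (Fin n) K) ^ k i with hQ
  have expand : ∀ c : Fin n → K, ((∑ j, c j • (X j : MvPolynomial (Fin n) K))) ^ m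
      = ∑ k ∈ piAntidiag (univ : Finset (Fin n)) m,
          ((Nat.multinomial univ k : K) * ∏ i, c i ^ k i) •
            monomial (Finsupp.equivFunOnFinite.symm k) 1 := by
    intro c
    rw [Finset.sum_pow_eq_sum_piAntidiag]
    refine Finset.sum_congr rfl fun k hk => ?_
    rw [← prod_X_pow_eq K n k]
    simp_rw [smul_eq_C_mul, mul_pow, Finset.prod_mul_distrib, ← map_pow, ← map_prod]
    rw [map_mul, C_eq_coe_nat]
    ring
  have hev : ∀ c : Fin n → K, eval c Q = 0 := by
    intro c
    have h1 : f ((∑ j, c j • (X j : MvPolynomial (Fin n) K)) ^ m)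
        = ∑ k ∈ piAntidiag (univ : Finset (Fin n)) m,
            ((Nat.multinomial univ k : K) * ∏ i, c i ^ k i) *
              f (monomial (Finsupp.equivFunOnFinite.symm k) 1) := by
      rw [expand c, map_sum]
      simp [smul_eq_mul]
    have h2 : eval c Q = ∑ k ∈ piAntidiag (univ : Finset (Fin n)) m,
        ((Nat.multinomial univ k : K) * f (monomial (Finsupp.equivFunOnFinite.symm k) 1)) *
          ∏ i, c i ^ k i := by
      rw [hQ, map_sum]
      refine Finset.sum_congr rfl fun k hk => ?_
      simp
    rw [h2, ← hf c, h1]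
    exact Finset.sum_congr rfl fun k hk => by ring
  have hQ0 : Q = 0 := MvPolynomial.funext fun c => by rw [hev c]; simp
  have hdmem : (⇑d : Fin n → ℕ) ∈ piAntidiag (univ : Finset (Fin n)) m := by
    rw [mem_piAntidiag]
    refine ⟨?_, fun i _ => mem_univ i⟩
    rw [← hd, Finsupp.degree]
    exact (Finset.sum_subset (Finset.subset_univ _) fun i _ hi => by
      simpa [Finsupp.mem_support_iff] using hi).symm
  have hco : coeff d Q = (Nat.multinomial univ ⇑d : K) * f (monomial d 1) := by
    rw [hQ, coeff_sum]
    rw [Finset.sum_eq_single_of_mem _ hdmem ?h0]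
    · rw [prod_X_pow_eq, coeff_C_mul, coeff_monomial]
      have : Finsupp.equivFunOnFinite.symm ⇑d = d := Finsupp.equivFunOnFinite.symm_apply_apply d
      rw [this]
      simp [this]
    case h0 =>
      intro k hk hne
      rw [prod_X_pow_eq, coeff_C_mul, coeff_monomial, if_neg, mul_zero]
      intro hEq
      apply hne
      have := congrArg (⇑Finsupp.equivFunOnFinite) hEq
      simp at this
      exact this
  have hmul : (Nat.multinomial univ ⇑d : K) ≠ 0 :=
    Nat.cast_ne_zero.mpr (Nat.multinomial_pos _ _).ne'
  have := hco.symm.trans (by rw [hQ0])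
  exact (mul_eq_zero.mp this).resolve_left hmul

private lemma span_powers (K : Type) [Field K] [CharZero K] (n m : ℕ) :
    Submodule.span K {x : MvPolynomial (Fin n) K | ∃ c : Fin n → K,
        x = (∑ j, c j • (X j : MvPolynomial (Fin n) K)) ^ m}
      = homogeneousSubmodule (Fin n) K m := by
  classical
  apply le_antisymm
  · rw [Submodule.span_le]
    rintro x ⟨c, rfl⟩
    rw [SetLike.mem_coe, mem_homogeneousSubmodule]
    have h1 : ((∑ j, c j • (X j : MvPolynomial (Fin n) K))).IsHomogeneous 1 := by
      rw [← mem_homogeneousSubmodule]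
      exact Submodule.sum_mem _ fun j _ => Submodule.smul_mem _ _
        ((mem_homogeneousSubmodule _ _).2 (isHomogeneous_X K j))
    simpa using h1.pow m
  · intro x hx
    by_contra hxs
    obtain ⟨f, hf0, hfmap⟩ := Submodule.exists_dual_map_eq_bot_of_notMem hxs
      inferInstance
    have hpow : ∀ c : Fin n → K, f ((∑ j, c j • (X j : MvPolynomial (Fin n) K)) ^ m) = 0 := by
      intro c
      have hm : f ((∑ j, c j • (X j : MvPolynomial (Fin n) K)) ^ m) ∈
          Submodule.map f (Submodule.span K {x : MvPolynomial (Fin n) K | ∃ c : Fin n → K,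
            x = (∑ j, c j • (X j : MvPolynomial (Fin n) K)) ^ m}) :=
        Submodule.mem_map_of_mem (Submodule.subset_span ⟨c, rfl⟩)
      rw [hfmap] at hm
      exact (Submodule.mem_bot K).mp hm
    have hmono := f_monomial_eq_zero K n m f hpow
    apply hf0
    rw [x.as_sum, map_sum]
    refine Finset.sum_eq_zero fun d hd => ?_
    have hdm : d.degree = m := by
      rw [mem_homogeneousSubmodule] at hx
      have := hx (MvPolynomial.mem_support_iff.mp hd)
      rwa [Finsupp.degree_eq_weight_one]
    have h2 : monomial d (coeff d x) = (coeff d x) • monomial d 1 := by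
      rw [smul_monomial, smul_eq_mul, mul_one]
    rw [h2, map_smul, hmono d hdm, smul_zero]

theorem homogeneous_polynomials_basis_of_powers (K : Type) [Field K] [CharZero K]
    (n m : ℕ) :
    ∃ (d : ℕ) (c : Fin d → Fin n → K),
      LinearIndependent K (fun i => (∑ j, c i j • (MvPolynomial.X j : MvPolynomial (Fin n) K)) ^ m) ∧
      Submodule.span K (Set.range fun i => (∑ j, c i j • (MvPolynomial.X j : MvPolynomial (Fin n) K)) ^ m)
        = MvPolynomial.homogeneousSubmodule (Fin n) K m := by
  classical
  obtain ⟨b, hbS, hbspan, hbind⟩ := exists_linearIndependent K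
    {x : MvPolynomial (Fin n) K | ∃ c : Fin n → K,
        x = (∑ j, c j • (X j : MvPolynomial (Fin n) K)) ^ m}
  rw [span_powers] at hbspan
  -- finite dimensionality of the homogeneous submodule
  have hVle : homogeneousSubmodule (Fin n) K m ≤ restrictTotalDegree (Fin n) K m := by
    intro p hp
    rw [mem_restrictTotalDegree]
    exact ((mem_homogeneousSubmodule _ _).1 hp).totalDegree_le
  haveI : FiniteDimensional K (homogeneousSubmodule (Fin n) K m) :=
    Submodule.finiteDimensional_of_le hVle
  -- b is finite
  have hbV : b ⊆ ↑(homogeneousSubmodule (Fin n) K m) := by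
    intro y hy
    rw [← hbspan]
    exact Submodule.subset_span hy
  have hind' : LinearIndependent K
      (fun y : b => (⟨(y : MvPolynomial (Fin n) K), hbV y.2⟩ :
        homogeneousSubmodule (Fin n) K m)) := by
    apply LinearIndependent.of_comp (homogeneousSubmodule (Fin n) K m).subtype
    exact hbind
  haveI : Finite b := hind'.finite
  haveI : Fintype b := Fintype.ofFinite _
  refine ⟨Fintype.card b, ?_, ?_, ?_⟩
  case _ =>
    exact fun i => Classical.choose (hbS ((Fintype.equivFin b).symm i).2)
  all_goals {
    have hfn : (fun i : Fin (Fintype.card b) =>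
        (∑ j, Classical.choose (hbS ((Fintype.equivFin b).symm i).2) j •
          (X j : MvPolynomial (Fin n) K)) ^ m)
        = fun i => (((Fintype.equivFin b).symm i : b) : MvPolynomial (Fin n) K) := by
      funext i
      exact (Classical.choose_spec (hbS ((Fintype.equivFin b).symm i).2)).symm
    rw [hfn]
    first
    | exact hbind.comp _ (Fintype.equivFin b).symm.injective
    | · have hr : (Set.range fun i => (((Fintype.equivFin ↑b).symm i : b) :
            MvPolynomial (Fin n) K)) = b := by
          have h2 := Function.Surjective.range_comp
            (g := (Subtype.val : b → MvPolynomial (Fin n) K))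
            (Fintype.equivFin ↑b).symm.surjective
          simpa [Function.comp_def, Subtype.range_coe] using h2
        rw [hr]
        exact hbspan
  }

end
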